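/- Let H be a finite-dimensional complex Hilbert space, ρ a density operator on H ⊗ H, η = Σⱼ γⱼ τⱼ ⊗ τⱼ a separable density operator (γⱼ > 0, Σγⱼ = 1, τⱼ density operators on H), and A, B₁, B₂ self-adjoint with operator norms at most 1. Then |tr[ρ(A ⊗ B₁)] - tr[ρ(A ⊗ B₂)]| ≤ 1 + ‖ρ - η‖₁·‖B₁ - B₂‖ - Σⱼ γⱼ tr[τⱼB₁]·tr[τⱼB₂], where ‖·‖₁ is the trace norm. -/

import Mathlib

set_option maxHeartbeats 1000000
set_option synthInstance.maxHeartbeats 400000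
set_option linter.unusedSectionVars false
set_option linter.unusedVariables false

open Matrix
open scoped ComplexOrder Kronecker

/-- The operator norm (ℓ²→ℓ² norm) of a square complex matrix. -/
noncomputable def opNorm {n : Type*} [Fintype n] [DecidableEq n] (A : Matrix n n ℂ) : ℝ :=
  ‖Matrix.toEuclideanCLM (𝕜 := ℂ) A‖

/-- The trace norm of a square complex matrix: the trace of √(AᴴA). -/
noncomputable def traceNorm {n : Type*} [Fintype n] [DecidableEq n] (A : Matrix n n ℂ) : ℝ :=
  ((((Matrix.posSemidef_conjTranspose_mul_self A).isHermitian.eigenvectorUnitary : Matrix n n ℂ) *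
      diagonal (((↑) : ℝ → ℂ) ∘
        ((Matrix.posSemidef_conjTranspose_mul_self A).isHermitian.eigenvalues · |>.sqrt)) *
      (star (Matrix.posSemidef_conjTranspose_mul_self A).isHermitian.eigenvectorUnitary :
        Matrix n n ℂ)).trace).re

section aux
variable {m : Type*} [Fintype m] [DecidableEq m]

lemma opNorm_nonneg' (A : Matrix m m ℂ) : 0 ≤ opNorm A := norm_nonneg _

lemma mulVec_eucl_norm_le (M : Matrix m m ℂ) (v : m → ℂ) :
    Real.sqrt (∑ i, ‖(M *ᵥ v) i‖ ^ 2) ≤ opNorm M * Real.sqrt (∑ i, ‖v i‖ ^ 2) := by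
  have h := (Matrix.toEuclideanCLM (𝕜 := ℂ) M).le_opNorm ((WithLp.equiv 2 (m → ℂ)).symm v)
  rw [WithLp.equiv_symm_apply, Matrix.toEuclideanCLM_toLp] at h
  simpa [EuclideanSpace.norm_eq, opNorm] using h

lemma norm_sq_complex (z : ℂ) : ((‖z‖ : ℂ))^2 = star z * z := by
  rw [← Complex.ofReal_pow, Complex.sq_norm, Complex.star_def,
    Complex.normSq_eq_conj_mul_self]

lemma entry_bound (X U : Matrix m m ℂ) (hU : star U * U = 1) (i : m) :
    ‖(star U * X * U) i i‖ ≤ opNorm X := by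
  set u : EuclideanSpace ℂ m := (WithLp.equiv 2 (m → ℂ)).symm (fun j => U j i) with hu
  have hsum : ((∑ j, ‖U j i‖ ^ 2 : ℝ) : ℂ) = 1 := by
    have h1 : (star U * U) i i = (1 : Matrix m m ℂ) i i := by rw [hU]
    rw [Matrix.mul_apply] at h1
    simp only [Matrix.star_apply, Matrix.one_apply_eq] at h1
    rw [← h1]
    push_cast
    exact Finset.sum_congr rfl fun j _ => norm_sq_complex _
  have hnu : ‖u‖ = 1 := by
    rw [EuclideanSpace.norm_eq]
    have h2 : (∑ j, ‖U j i‖ ^ 2 : ℝ) = 1 := by exact_mod_cast hsum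
    simp only [hu, WithLp.equiv_symm_apply, WithLp.ofLp_toLp]
    rw [h2, Real.sqrt_one]
  have key : (star U * X * U) i i = inner ℂ u ((Matrix.toEuclideanCLM (𝕜 := ℂ) X) u) := by
    rw [mul_assoc, Matrix.mul_apply, PiLp.inner_apply]
    simp only [hu, WithLp.equiv_symm_apply, Matrix.toEuclideanCLM_toLp,
      WithLp.ofLp_toLp, RCLike.inner_apply]
    refine Finset.sum_congr rfl fun j _ => ?_
    rw [Matrix.star_apply, Matrix.mul_apply]
    simp [Matrix.mulVec, dotProduct, mul_comm]
  rw [key]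
  calc ‖(inner ℂ u ((Matrix.toEuclideanCLM (𝕜 := ℂ) X) u) : ℂ)‖
      ≤ ‖u‖ * ‖(Matrix.toEuclideanCLM (𝕜 := ℂ) X) u‖ := norm_inner_le_norm _ _
    _ ≤ ‖u‖ * (opNorm X * ‖u‖) := by
        gcongr
        exact (Matrix.toEuclideanCLM (𝕜 := ℂ) X).le_opNorm u
    _ = opNorm X := by rw [hnu]; ring

lemma trace_eq_sum_eig {M : Matrix m m ℂ} (hM : M.IsHermitian) :
    M.trace = ∑ i, (hM.eigenvalues i : ℂ) := by
  conv_lhs => rw [hM.spectral_theorem, Unitary.conjStarAlgAut_apply]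
  rw [Matrix.trace_mul_cycle, Matrix.mem_unitaryGroup_iff'.mp (hM.eigenvectorUnitary).2, one_mul,
    Matrix.trace_diagonal]
  rfl

lemma trace_diag_mul (f : m → ℂ) (Y : Matrix m m ℂ) :
    (Matrix.diagonal f * Y).trace = ∑ i, f i * Y i i := by
  rw [Matrix.trace]
  refine Finset.sum_congr rfl fun i _ => ?_
  rw [Matrix.diag_apply, Matrix.diagonal_mul]

lemma trace_mul_abs_le {M : Matrix m m ℂ} (hM : M.IsHermitian) (X : Matrix m m ℂ) :
    ‖(M * X).trace‖ ≤ (∑ i, |hM.eigenvalues i|) * opNorm X := by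
  have hU : star (hM.eigenvectorUnitary : Matrix m m ℂ) * (hM.eigenvectorUnitary : Matrix m m ℂ) = 1 :=
    Matrix.mem_unitaryGroup_iff'.mp (hM.eigenvectorUnitary).2
  set U : Matrix m m ℂ := (hM.eigenvectorUnitary : Matrix m m ℂ) with hUdef
  set f : m → ℂ := RCLike.ofReal ∘ hM.eigenvalues with hf
  have htr : (M * X).trace = ∑ i, f i * (star U * X * U) i i := by
    conv_lhs => rw [hM.spectral_theorem, Unitary.conjStarAlgAut_apply]
    rw [show U * Matrix.diagonal f * star U * X = U * (Matrix.diagonal f * (star U * X)) by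
      simp [mul_assoc], Matrix.trace_mul_comm,
      show Matrix.diagonal f * (star U * X) * U = Matrix.diagonal f * (star U * X * U) by
      simp [mul_assoc], trace_diag_mul]
  rw [htr]
  calc ‖∑ i, f i * (star U * X * U) i i‖
      ≤ ∑ i, ‖f i * (star U * X * U) i i‖ := by
        exact norm_sum_le Finset.univ (fun i => f i * (star U * X * U) i i)
    _ ≤ ∑ i, |hM.eigenvalues i| * opNorm X := by
        refine Finset.sum_le_sum fun i _ => ?_
        rw [norm_mul]
        have h1 : ‖f i‖ = |hM.eigenvalues i| := by
          simp [hf]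
        rw [h1]
        exact mul_le_mul_of_nonneg_left (entry_bound X U hU i) (abs_nonneg _)
    _ = (∑ i, |hM.eigenvalues i|) * opNorm X := by rw [Finset.sum_mul]

lemma traceNorm_hermitian {M : Matrix m m ℂ} (hM : M.IsHermitian) :
    traceNorm M = ∑ i, |hM.eigenvalues i| := by
  have hMM := (Matrix.posSemidef_conjTranspose_mul_self M).isHermitian
  have e1 : traceNorm M = ((cfc Real.sqrt (Mᴴ * M)).trace).re := by
    rw [Matrix.IsHermitian.cfc_eq hMM, Matrix.IsHermitian.cfc, Unitary.conjStarAlgAut_apply]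
    rfl
  have hsa : IsSelfAdjoint M := hM
  have e2 : cfc Real.sqrt (Mᴴ * M) = cfc (fun x : ℝ => |x|) M := by
    have hsq : cfc (fun x : ℝ => x * x) M = Mᴴ * M := by
      rw [cfc_mul (fun x : ℝ => x) (fun x : ℝ => x) M, cfc_id' ℝ M, hM.eq]
    rw [← hsq, ← cfc_comp' Real.sqrt (fun x : ℝ => x * x) M]
    congr 1
    funext x
    exact Real.sqrt_mul_self_eq_abs x
  rw [e1, e2, Matrix.IsHermitian.cfc_eq hM, Matrix.IsHermitian.cfc, Unitary.conjStarAlgAut_apply,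
    Matrix.trace_mul_cycle, Matrix.mem_unitaryGroup_iff'.mp (hM.eigenvectorUnitary).2, one_mul,
    Matrix.trace_diagonal]
  simp [Complex.re_sum]

lemma opNorm_le_of_mulVec (M : Matrix m m ℂ) {c : ℝ} (hc : 0 ≤ c)
    (h : ∀ w : m → ℂ, Real.sqrt (∑ i, ‖(M *ᵥ w) i‖ ^ 2) ≤ c * Real.sqrt (∑ i, ‖w i‖ ^ 2)) :
    opNorm M ≤ c := by
  rw [opNorm]
  refine ContinuousLinearMap.opNorm_le_bound _ hc fun x => ?_
  have h2 := h ((WithLp.equiv 2 (m → ℂ)) x)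
  have hCLM : (Matrix.toEuclideanCLM (𝕜 := ℂ) M) x
      = (WithLp.equiv 2 (m → ℂ)).symm (M *ᵥ ((WithLp.equiv 2 (m → ℂ)) x)) := by
    conv_lhs => rw [show x = (WithLp.equiv 2 (m → ℂ)).symm ((WithLp.equiv 2 (m → ℂ)) x) from
      ((WithLp.equiv 2 (m → ℂ)).symm_apply_apply x).symm]
    rw [WithLp.equiv_symm_apply, Matrix.toEuclideanCLM_toLp]
  rw [hCLM]
  simpa [EuclideanSpace.norm_eq] using h2

end aux

section kron
variable {p q : Type*} [Fintype p] [DecidableEq p] [Fintype q] [DecidableEq q]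

lemma sum_sq_mulVec_le (A : Matrix p p ℂ) (v : p → ℂ) :
    ∑ i, ‖(A *ᵥ v) i‖ ^ 2 ≤ (opNorm A) ^ 2 * ∑ i, ‖v i‖ ^ 2 := by
  have h := mulVec_eucl_norm_le A v
  have h2 := mul_self_le_mul_self (Real.sqrt_nonneg _) h
  rw [Real.mul_self_sqrt (by positivity)] at h2
  calc ∑ i, ‖(A *ᵥ v) i‖ ^ 2
      ≤ opNorm A * Real.sqrt (∑ i, ‖v i‖ ^ 2) * (opNorm A * Real.sqrt (∑ i, ‖v i‖ ^ 2)) := h2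
    _ = (opNorm A) ^ 2 * (Real.sqrt (∑ i, ‖v i‖ ^ 2) * Real.sqrt (∑ i, ‖v i‖ ^ 2)) := by ring
    _ = (opNorm A) ^ 2 * ∑ i, ‖v i‖ ^ 2 := by rw [Real.mul_self_sqrt (by positivity)]

lemma kron_one_mulVec (A : Matrix p p ℂ) (w : p × q → ℂ) :
    ((A ⊗ₖ (1 : Matrix q q ℂ)) *ᵥ w) = fun x => (A *ᵥ fun k => w (k, x.2)) x.1 := by
  funext x
  obtain ⟨i, j⟩ := x
  simp [Matrix.mulVec, dotProduct, Fintype.sum_prod_type, Matrix.one_apply,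
    mul_ite, mul_zero, ite_mul, zero_mul, mul_one]

lemma one_kron_mulVec (B : Matrix q q ℂ) (w : p × q → ℂ) :
    (((1 : Matrix p p ℂ) ⊗ₖ B) *ᵥ w) = fun x => (B *ᵥ fun l => w (x.1, l)) x.2 := by
  funext x
  obtain ⟨i, j⟩ := x
  simp [Matrix.mulVec, dotProduct, Fintype.sum_prod_type, Matrix.one_apply,
    mul_ite, mul_zero, ite_mul, zero_mul, one_mul]

lemma sqrt_le_of_sq_le {a : ℝ} {c : ℝ} {t : ℝ} (hc : 0 ≤ c) (ht : 0 ≤ t)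
    (h : a ≤ c ^ 2 * t) : Real.sqrt a ≤ c * Real.sqrt t := by
  have := Real.sqrt_le_sqrt h
  calc Real.sqrt a ≤ Real.sqrt (c ^ 2 * t) := this
    _ = c * Real.sqrt t := by
        rw [Real.sqrt_mul (by positivity), Real.sqrt_sq hc]

lemma opNorm_kron_one (A : Matrix p p ℂ) :
    opNorm (A ⊗ₖ (1 : Matrix q q ℂ)) ≤ opNorm A := by
  refine opNorm_le_of_mulVec _ (opNorm_nonneg' A) fun w => ?_
  rw [kron_one_mulVec]
  refine sqrt_le_of_sq_le (opNorm_nonneg' A) (by positivity) ?_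
  calc ∑ x : p × q, ‖(A *ᵥ fun k => w (k, x.2)) x.1‖ ^ 2
      = ∑ j : q, ∑ i : p, ‖(A *ᵥ fun k => w (k, j)) i‖ ^ 2 := by
        rw [Fintype.sum_prod_type]; exact Finset.sum_comm
    _ ≤ ∑ j : q, (opNorm A) ^ 2 * ∑ k : p, ‖w (k, j)‖ ^ 2 :=
        Finset.sum_le_sum fun j _ => sum_sq_mulVec_le A _
    _ = (opNorm A) ^ 2 * ∑ x : p × q, ‖w x‖ ^ 2 := by
        rw [← Finset.mul_sum, Fintype.sum_prod_type]
        congr 1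
        exact Finset.sum_comm

lemma opNorm_one_kron (B : Matrix q q ℂ) :
    opNorm ((1 : Matrix p p ℂ) ⊗ₖ B) ≤ opNorm B := by
  refine opNorm_le_of_mulVec _ (opNorm_nonneg' B) fun w => ?_
  rw [one_kron_mulVec]
  refine sqrt_le_of_sq_le (opNorm_nonneg' B) (by positivity) ?_
  calc ∑ x : p × q, ‖(B *ᵥ fun l => w (x.1, l)) x.2‖ ^ 2
      = ∑ i : p, ∑ j : q, ‖(B *ᵥ fun l => w (i, l)) j‖ ^ 2 := by
        rw [Fintype.sum_prod_type]
    _ ≤ ∑ i : p, (opNorm B) ^ 2 * ∑ l : q, ‖w (i, l)‖ ^ 2 :=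
        Finset.sum_le_sum fun i _ => sum_sq_mulVec_le B _
    _ = (opNorm B) ^ 2 * ∑ x : p × q, ‖w x‖ ^ 2 := by
        rw [← Finset.mul_sum, Fintype.sum_prod_type]

lemma opNorm_kron_le (A : Matrix p p ℂ) (B : Matrix q q ℂ) :
    opNorm (A ⊗ₖ B) ≤ opNorm A * opNorm B := by
  have hd : A ⊗ₖ B = (A ⊗ₖ (1 : Matrix q q ℂ)) * ((1 : Matrix p p ℂ) ⊗ₖ B) := by
    rw [← Matrix.mul_kronecker_mul, mul_one, one_mul]
  rw [hd, opNorm, _root_.map_mul]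
  calc ‖Matrix.toEuclideanCLM (𝕜 := ℂ) (A ⊗ₖ (1 : Matrix q q ℂ)) *
        Matrix.toEuclideanCLM (𝕜 := ℂ) ((1 : Matrix p p ℂ) ⊗ₖ B)‖
      ≤ ‖Matrix.toEuclideanCLM (𝕜 := ℂ) (A ⊗ₖ (1 : Matrix q q ℂ))‖ *
        ‖Matrix.toEuclideanCLM (𝕜 := ℂ) ((1 : Matrix p p ℂ) ⊗ₖ B)‖ := norm_mul_le _ _
    _ ≤ opNorm A * opNorm B :=
        mul_le_mul (opNorm_kron_one A) (opNorm_one_kron B) (norm_nonneg _) (opNorm_nonneg' A)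

lemma kron_sub (A : Matrix p p ℂ) (B C : Matrix q q ℂ) :
    A ⊗ₖ (B - C) = A ⊗ₖ B - A ⊗ₖ C := by
  ext x y
  simp [Matrix.kroneckerMap_apply, Matrix.sub_apply, mul_sub]

lemma kron_conjTranspose (A : Matrix p p ℂ) (B : Matrix q q ℂ) :
    (A ⊗ₖ B)ᴴ = Aᴴ ⊗ₖ Bᴴ := by
  ext x y
  simp [Matrix.conjTranspose_apply, Matrix.kroneckerMap_apply, mul_comm]

end kron

section real
variable {m : Type*} [Fintype m] [DecidableEq m]

lemma trace_mul_herm_real {S T : Matrix m m ℂ} (hS : S.IsHermitian) (hT : T.IsHermitian) :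
    (((S * T).trace).re : ℂ) = (S * T).trace := by
  rw [← Complex.conj_eq_iff_re]
  calc (starRingEnd ℂ) ((S * T).trace) = ((S * T)ᴴ).trace := by
        rw [Matrix.trace_conjTranspose]; rfl
    _ = (Tᴴ * Sᴴ).trace := by rw [Matrix.conjTranspose_mul]
    _ = (T * S).trace := by rw [hS.eq, hT.eq]
    _ = (S * T).trace := Matrix.trace_mul_comm _ _

end real

section trbound
variable {m : Type*} [Fintype m] [DecidableEq m]

lemma re_trace_psd_mul_le_one {T C : Matrix m m ℂ} (hT : T.PosSemidef) (htr : T.trace = 1)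
    (hCn : opNorm C ≤ 1) : |((T * C).trace).re| ≤ 1 := by
  have h1 := trace_mul_abs_le hT.1 C
  have h2 : ∑ i, |hT.1.eigenvalues i| = 1 := by
    have h3 : ((∑ i, hT.1.eigenvalues i : ℝ) : ℂ) = 1 := by
      push_cast
      rw [← trace_eq_sum_eig hT.1, htr]
    have h4 : (∑ i, hT.1.eigenvalues i : ℝ) = 1 := by exact_mod_cast h3
    rw [← h4]
    exact Finset.sum_congr rfl fun i _ => abs_of_nonneg (hT.eigenvalues_nonneg i)
  calc |((T * C).trace).re| ≤ ‖(T * C).trace‖ := Complex.abs_re_le_norm _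
    _ ≤ (∑ i, |hT.1.eigenvalues i|) * opNorm C := h1
    _ = opNorm C := by rw [h2, one_mul]
    _ ≤ 1 := hCn

lemma traceNorm_nonneg' {M : Matrix m m ℂ} (hM : M.IsHermitian) : 0 ≤ traceNorm M := by
  rw [traceNorm_hermitian hM]
  exact Finset.sum_nonneg fun i _ => abs_nonneg _

end trbound

theorem quantum_analog_bell_inequality {n N : ℕ}
    (A B₁ B₂ : Matrix (Fin n) (Fin n) ℂ)
    (hA : A.IsHermitian) (hB₁ : B₁.IsHermitian) (hB₂ : B₂.IsHermitian)
    (hAn : opNorm A ≤ 1) (hB₁n : opNorm B₁ ≤ 1) (hB₂n : opNorm B₂ ≤ 1)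
    (γ : Fin N → ℝ) (hγpos : ∀ j, 0 < γ j) (hγsum : ∑ j, γ j = 1)
    (τ : Fin N → Matrix (Fin n) (Fin n) ℂ)
    (hτ : ∀ j, (τ j).PosSemidef) (hτtr : ∀ j, (τ j).trace = 1)
    (ρ : Matrix (Fin n × Fin n) (Fin n × Fin n) ℂ)
    (hρ : ρ.PosSemidef) (hρtr : ρ.trace = 1)
    (η : Matrix (Fin n × Fin n) (Fin n × Fin n) ℂ)
    (hη : η = ∑ j, (γ j : ℂ) • (τ j ⊗ₖ τ j)) :
    |((ρ * (A ⊗ₖ B₁)).trace).re - ((ρ * (A ⊗ₖ B₂)).trace).re| ≤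
      1 + traceNorm (ρ - η) * opNorm (B₁ - B₂) -
        ∑ j, γ j * ((τ j * B₁).trace).re * ((τ j * B₂).trace).re := by
  set ΔB : Matrix (Fin n) (Fin n) ℂ := B₁ - B₂ with hΔB
  set a : Fin N → ℝ := fun j => ((τ j * A).trace).re with ha
  set b₁ : Fin N → ℝ := fun j => ((τ j * B₁).trace).re with hb₁
  set b₂ : Fin N → ℝ := fun j => ((τ j * B₂).trace).re with hb₂
  have hηherm : η.IsHermitian := by
    rw [Matrix.IsHermitian, hη, Matrix.conjTranspose_sum]
    refine Finset.sum_congr rfl fun j _ => ?_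
    rw [Matrix.conjTranspose_smul, kron_conjTranspose, (hτ j).1.eq, Complex.star_def,
      Complex.conj_ofReal]
  have hMherm : (ρ - η).IsHermitian := hρ.1.sub hηherm
  have hsplit : (ρ * (A ⊗ₖ B₁)).trace - (ρ * (A ⊗ₖ B₂)).trace
      = ((ρ - η) * (A ⊗ₖ ΔB)).trace + (η * (A ⊗ₖ ΔB)).trace := by
    rw [hΔB, kron_sub, Matrix.sub_mul, Matrix.trace_sub, Matrix.mul_sub, Matrix.trace_sub,
      Matrix.mul_sub, Matrix.trace_sub]
    ring
  have hetaterm : (η * (A ⊗ₖ ΔB)).trace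
      = ∑ j, (γ j : ℂ) * ((τ j * A).trace * ((τ j * B₁).trace - (τ j * B₂).trace)) := by
    rw [hη, Finset.sum_mul, Matrix.trace_sum]
    refine Finset.sum_congr rfl fun j _ => ?_
    rw [Matrix.smul_mul, Matrix.trace_smul, ← Matrix.mul_kronecker_mul, Matrix.trace_kronecker,
      hΔB, Matrix.mul_sub, Matrix.trace_sub, smul_eq_mul]
  have hτA : ∀ j, (τ j * A).trace = ((a j : ℝ) : ℂ) :=
    fun j => (trace_mul_herm_real (hτ j).1 hA).symm
  have hτB₁ : ∀ j, (τ j * B₁).trace = ((b₁ j : ℝ) : ℂ) :=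
    fun j => (trace_mul_herm_real (hτ j).1 hB₁).symm
  have hτB₂ : ∀ j, (τ j * B₂).trace = ((b₂ j : ℝ) : ℂ) :=
    fun j => (trace_mul_herm_real (hτ j).1 hB₂).symm
  have hre : ((ρ * (A ⊗ₖ B₁)).trace).re - ((ρ * (A ⊗ₖ B₂)).trace).re
      = (((ρ - η) * (A ⊗ₖ ΔB)).trace).re + ∑ j, γ j * (a j * (b₁ j - b₂ j)) := by
    rw [← Complex.sub_re, hsplit, Complex.add_re]
    congr 1
    rw [hetaterm, Complex.re_sum]
    refine Finset.sum_congr rfl fun j _ => ?_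
    rw [hτA j, hτB₁ j, hτB₂ j, ← Complex.ofReal_sub, ← Complex.ofReal_mul, ← Complex.ofReal_mul,
      Complex.ofReal_re]
  have haj : ∀ j, |a j| ≤ 1 := fun j => re_trace_psd_mul_le_one (hτ j) (hτtr j) hAn
  have hb₁j : ∀ j, |b₁ j| ≤ 1 := fun j => re_trace_psd_mul_le_one (hτ j) (hτtr j) hB₁n
  have hb₂j : ∀ j, |b₂ j| ≤ 1 := fun j => re_trace_psd_mul_le_one (hτ j) (hτtr j) hB₂n
  have hdist : |(((ρ - η) * (A ⊗ₖ ΔB)).trace).re| ≤ traceNorm (ρ - η) * opNorm ΔB := by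
    have hXn : opNorm (A ⊗ₖ ΔB) ≤ opNorm ΔB := by
      calc opNorm (A ⊗ₖ ΔB) ≤ opNorm A * opNorm ΔB := opNorm_kron_le A ΔB
        _ ≤ 1 * opNorm ΔB := mul_le_mul_of_nonneg_right hAn (opNorm_nonneg' ΔB)
        _ = opNorm ΔB := one_mul _
    calc |(((ρ - η) * (A ⊗ₖ ΔB)).trace).re|
        ≤ ‖((ρ - η) * (A ⊗ₖ ΔB)).trace‖ := Complex.abs_re_le_norm _
      _ ≤ (∑ i, |hMherm.eigenvalues i|) * opNorm (A ⊗ₖ ΔB) := trace_mul_abs_le hMherm _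
      _ = traceNorm (ρ - η) * opNorm (A ⊗ₖ ΔB) := by rw [traceNorm_hermitian hMherm]
      _ ≤ traceNorm (ρ - η) * opNorm ΔB :=
          mul_le_mul_of_nonneg_left hXn (traceNorm_nonneg' hMherm)
  have hsumbound : |∑ j, γ j * (a j * (b₁ j - b₂ j))| ≤ 1 - ∑ j, γ j * (b₁ j * b₂ j) := by
    calc |∑ j, γ j * (a j * (b₁ j - b₂ j))| ≤ ∑ j, |γ j * (a j * (b₁ j - b₂ j))| :=
          Finset.abs_sum_le_sum_abs _ _
      _ ≤ ∑ j, γ j * (1 - b₁ j * b₂ j) := by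
          refine Finset.sum_le_sum fun j _ => ?_
          rw [abs_mul, abs_of_nonneg (hγpos j).le]
          refine mul_le_mul_of_nonneg_left ?_ (hγpos j).le
          have h1 := abs_le.mp (haj j)
          have h2 := abs_le.mp (hb₁j j)
          have h3 := abs_le.mp (hb₂j j)
          rw [abs_mul]
          have h5 : |b₁ j - b₂ j| ≤ 1 - b₁ j * b₂ j := by
            refine abs_le.mpr ⟨by nlinarith [h2.1, h2.2, h3.1, h3.2], by
              nlinarith [h2.1, h2.2, h3.1, h3.2]⟩
          calc |a j| * |b₁ j - b₂ j| ≤ 1 * |b₁ j - b₂ j| :=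
                mul_le_mul_of_nonneg_right (haj j) (abs_nonneg _)
            _ = |b₁ j - b₂ j| := one_mul _
            _ ≤ 1 - b₁ j * b₂ j := h5
      _ = ∑ j, γ j - ∑ j, γ j * (b₁ j * b₂ j) := by
          rw [← Finset.sum_sub_distrib]
          exact Finset.sum_congr rfl fun j _ => by ring
      _ = 1 - ∑ j, γ j * (b₁ j * b₂ j) := by rw [hγsum]
  have hfinal : |((ρ * (A ⊗ₖ B₁)).trace).re - ((ρ * (A ⊗ₖ B₂)).trace).re|
      ≤ traceNorm (ρ - η) * opNorm ΔB + (1 - ∑ j, γ j * (b₁ j * b₂ j)) := by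
    rw [hre]
    calc |(((ρ - η) * (A ⊗ₖ ΔB)).trace).re + ∑ j, γ j * (a j * (b₁ j - b₂ j))|
        ≤ |(((ρ - η) * (A ⊗ₖ ΔB)).trace).re| + |∑ j, γ j * (a j * (b₁ j - b₂ j))| := abs_add_le _ _
      _ ≤ traceNorm (ρ - η) * opNorm ΔB + (1 - ∑ j, γ j * (b₁ j * b₂ j)) :=
          add_le_add hdist hsumbound
  have hrw : ∑ j, γ j * ((τ j * B₁).trace).re * ((τ j * B₂).trace).re
      = ∑ j, γ j * (b₁ j * b₂ j) := Finset.sum_congr rfl fun j _ => by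
    rw [hb₁, hb₂]; ring
  rw [hrw]
  linarith [hfinal]
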